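/- Let T > 0 and let γ = [[a,b],[c,d]] ∈ SL(2,ℂ) with c ≠ 0 and 1/|c| > T. Let w = [[1,ω],[0,1]] with 0 < |ω| ≤ T. Define the sequence γ₀ = γ, γ_{n+1} = γ_n w γ_n⁻¹. Then the lower-left entries c_n of γ_n satisfy |c_{n+1}| ≤ |c_n|² |ω| < |c_n|, so |c_n| → 0 as n → ∞. -/

import Mathlib

open Complex Filter

/-- The parabolic translation `[[1,ω],[0,1]]` as an element of `SL(2,ℂ)`. -/
noncomputable def transMat (ω : ℂ) : Matrix.SpecialLinearGroup (Fin 2) ℂ :=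
  ⟨!![1, ω; 0, 1], by simp [Matrix.det_fin_two_of]⟩

lemma conj_entry (ω : ℂ) (S : Matrix.SpecialLinearGroup (Fin 2) ℂ) :
    ((S * transMat ω * S⁻¹ : Matrix.SpecialLinearGroup (Fin 2) ℂ) :
      Matrix (Fin 2) (Fin 2) ℂ) 1 0 =
      -((S : Matrix (Fin 2) (Fin 2) ℂ) 1 0) ^ 2 * ω := by
  have hinv : ((S⁻¹ : Matrix.SpecialLinearGroup (Fin 2) ℂ) : Matrix (Fin 2) (Fin 2) ℂ)
      = Matrix.adjugate (S : Matrix (Fin 2) (Fin 2) ℂ) :=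
    Matrix.SpecialLinearGroup.coe_inv S
  rw [Matrix.SpecialLinearGroup.coe_mul, Matrix.SpecialLinearGroup.coe_mul]
  simp only [Matrix.SpecialLinearGroup.coe_mul, hinv, transMat,
    Matrix.adjugate_fin_two, Matrix.mul_apply, Fin.sum_univ_two,
    Matrix.cons_val', Matrix.cons_val_zero, Matrix.cons_val_one, Matrix.head_cons,
    Matrix.empty_val', Matrix.cons_val_fin_one, Matrix.head_fin_const]
  simp
  ring

theorem shimizu_iteration (T : ℝ) (hT : 0 < T)
    (g : Matrix.SpecialLinearGroup (Fin 2) ℂ)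
    (hc : (g : Matrix (Fin 2) (Fin 2) ℂ) 1 0 ≠ 0)
    (hrad : 1 / ‖(g : Matrix (Fin 2) (Fin 2) ℂ) 1 0‖ > T)
    (ω : ℂ) (hω0 : ω ≠ 0) (hωT : ‖ω‖ ≤ T)
    (f : ℕ → Matrix.SpecialLinearGroup (Fin 2) ℂ)
    (hf0 : f 0 = g) (hfs : ∀ n, f (n + 1) = f n * transMat ω * (f n)⁻¹) :
    (∀ n, ‖(f (n + 1) : Matrix (Fin 2) (Fin 2) ℂ) 1 0‖ ≤
        ‖(f n : Matrix (Fin 2) (Fin 2) ℂ) 1 0‖ ^ 2 * ‖ω‖ ∧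
      ‖(f (n + 1) : Matrix (Fin 2) (Fin 2) ℂ) 1 0‖ <
        ‖(f n : Matrix (Fin 2) (Fin 2) ℂ) 1 0‖) ∧
    Tendsto (fun n => ‖(f n : Matrix (Fin 2) (Fin 2) ℂ) 1 0‖) atTop
      (nhds 0) := by
  set c : ℕ → ℝ := fun n => ‖(f n : Matrix (Fin 2) (Fin 2) ℂ) 1 0‖ with hcdef
  have hstep : ∀ n, c (n + 1) = c n ^ 2 * ‖ω‖ := by
    intro n
    simp only [hcdef, hfs n, conj_entry, norm_mul, norm_neg, norm_pow]
  have hc0 : c 0 = ‖(g : Matrix (Fin 2) (Fin 2) ℂ) 1 0‖ := by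
    simp [hcdef, hf0]
  have hc0pos : 0 < c 0 := by rw [hc0]; exact norm_pos_iff.mpr hc
  have hωpos : 0 < ‖ω‖ := norm_pos_iff.mpr hω0
  have hr : c 0 * ‖ω‖ < 1 := by
    have h1 : T * c 0 < 1 := (lt_div_iff₀ hc0pos).mp (by rw [hc0]; exact hrad)
    nlinarith [hωpos.le, mul_le_mul_of_nonneg_left hωT hc0pos.le]
  -- monotone decreasing and positive
  have hpos : ∀ n, 0 < c n := by
    intro n
    induction n with
    | zero => exact hc0pos
    | succ k ih => rw [hstep k]; positivity
  have hlt1 : ∀ n, c n * ‖ω‖ < 1 := by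
    intro n
    induction n with
    | zero => exact hr
    | succ k ih =>
      rw [hstep k]
      have : c k ^ 2 * ‖ω‖ ≤ c k := by nlinarith [hpos k, hωpos]
      calc c k ^ 2 * ‖ω‖ * ‖ω‖ ≤ c k * ‖ω‖ :=
            mul_le_mul_of_nonneg_right this hωpos.le
        _ < 1 := ih
  have hdec : ∀ n, c (n + 1) < c n := by
    intro n
    rw [hstep n]
    have := hlt1 n
    nlinarith [hpos n]
  refine ⟨fun n => ⟨le_of_eq (hstep n), hdec n⟩, ?_⟩
  -- geometric bound: c n ≤ c 0 * r ^ n with r = c 0 * |ω| < 1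
  have hcn_le : ∀ n, c n ≤ c 0 := by
    intro n
    induction n with
    | zero => exact le_rfl
    | succ k ih => exact le_of_lt (lt_of_lt_of_le (hdec k) ih)
  have hgeom : ∀ n, c n ≤ c 0 * (c 0 * ‖ω‖) ^ n := by
    intro n
    induction n with
    | zero => simp
    | succ k ih =>
      rw [hstep k, pow_succ]
      calc c k ^ 2 * ‖ω‖ = c k * (c k * ‖ω‖) := by ring
        _ ≤ (c 0 * (c 0 * ‖ω‖) ^ k) * (c 0 * ‖ω‖) := by
            apply mul_le_mul ih (mul_le_mul_of_nonneg_right (hcn_le k) hωpos.le)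
              (by positivity) (by positivity)
        _ = c 0 * ((c 0 * ‖ω‖) ^ k * (c 0 * ‖ω‖)) := by ring
  have hrpos : (0:ℝ) ≤ c 0 * ‖ω‖ := by positivity
  have htend : Tendsto (fun n => c 0 * (c 0 * ‖ω‖) ^ n) atTop (nhds 0) := by
    have := tendsto_pow_atTop_nhds_zero_of_lt_one hrpos hr
    simpa using this.const_mul (c 0)
  exact squeeze_zero (fun n => (hpos n).le) hgeom htend
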